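/- arXiv:math/0311103 — 3 statements merged into one kernel-verified Lean document; each statement's English description precedes it below -/
import Mathlib

section
/- Lemma 4: for all natural numbers m and k ≥ 1, if G(k, m) = (k+1)^l is a single-term hereditary base-(k+1) representation with coefficient 1 and exponent l satisfying l ≥ k+1, then G(k+1, m) > G(k, m). -/
/-- `hsub b u m` substitutes the value `u` for the base `b` throughout the
hereditary base-`b` representation of `m` (with `hsub b u 0 = 0`). -/
def hsub (b u : ℕ) (m : ℕ) : ℕ :=
  if m = 0 then 0
  else
    u ^ hsub b u (Nat.log b m) * (m / b ^ Nat.log b m) + hsub b u (m % b ^ Nat.log b m)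
termination_by m
decreasing_by
  · exact Nat.log_lt_self b (by assumption)
  · have hpos : 0 < b ^ Nat.log b m := by
      rcases Nat.eq_zero_or_pos b with hb | hb
      · simp [hb]
      · exact Nat.pow_pos hb
    exact lt_of_lt_of_le (Nat.mod_lt _ hpos) (Nat.pow_log_le_self b (by assumption))

/-- Goodstein's base-change ("bumping") function: replace the base `b` by `b + 1`
throughout the hereditary base-`b` representation of `m` (with `B b 0 = 0`). -/
def B (b m : ℕ) : ℕ := hsub b (b + 1) m

/-- The Goodstein sequence of `m`: `G 1 m = m`, and `G (k+1) m = B (k+1) (G k m) - 1`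
for `k ≥ 1` (truncated subtraction), so the `k`-th term is written in hereditary
base `k + 1`. -/
def G : ℕ → ℕ → ℕ
  | 0, m => m
  | 1, m => m
  | (k + 2), m => B (k + 2) (G (k + 1) m) - 1

/-- The auxiliary Goodstein-type sequence: `L 1 k = k ^ k` (written in hereditary
base `k`), and `L (n+1) k = B (k+n-1) (L n k) - 1` for `n ≥ 1` (truncated
subtraction), so the `n`-th term is written in hereditary base `k + n - 1`. -/
def L : ℕ → ℕ → ℕ
  | 0, k => k ^ k
  | 1, k => k ^ k
  | (n + 2), k => B (k + n) (L (n + 1) k) - 1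

/-- `O b m` is the ordinal obtained by substituting `ω` for the base `b`
throughout the hereditary base-`b` representation of `m` (with `O b 0 = 0`). -/
noncomputable def O (b : ℕ) (m : ℕ) : Ordinal :=
  if m = 0 then 0
  else
    Ordinal.omega0 ^ O b (Nat.log b m) * ((m / b ^ Nat.log b m : ℕ) : Ordinal)
      + O b (m % b ^ Nat.log b m)
termination_by m
decreasing_by
  · exact Nat.log_lt_self b (by assumption)
  · have hpos : 0 < b ^ Nat.log b m := by
      rcases Nat.eq_zero_or_pos b with hb | hb
      · simp [hb]
      · exact Nat.pow_pos hb
    exact lt_of_lt_of_le (Nat.mod_lt _ hpos) (Nat.pow_log_le_self b (by assumption))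

lemma hsub_ge (b u : ℕ) (hb : 2 ≤ b) (hu : b ≤ u) : ∀ m, m ≤ hsub b u m := by
  intro m
  induction m using Nat.strong_induction_on with
  | _ m ih =>
    rcases eq_or_ne m 0 with rfl | hm
    · rw [hsub]; simp
    rw [hsub, if_neg hm]
    have hlog : Nat.log b m < m := Nat.log_lt_self b hm
    have hpos : 0 < b ^ Nat.log b m := Nat.pow_pos (by omega)
    have hle : b ^ Nat.log b m ≤ m := Nat.pow_log_le_self b hm
    have hmod : m % b ^ Nat.log b m < m := lt_of_lt_of_le (Nat.mod_lt _ hpos) hle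
    have h1 : Nat.log b m ≤ hsub b u (Nat.log b m) := ih _ hlog
    have h2 : m % b ^ Nat.log b m ≤ hsub b u (m % b ^ Nat.log b m) := ih _ hmod
    have h3 : b ^ Nat.log b m ≤ u ^ hsub b u (Nat.log b m) :=
      le_trans (Nat.pow_le_pow_left hu _) (Nat.pow_le_pow_right (by omega) h1)
    calc m = b ^ Nat.log b m * (m / b ^ Nat.log b m) + m % b ^ Nat.log b m :=
            (Nat.div_add_mod m _).symm
      _ ≤ u ^ hsub b u (Nat.log b m) * (m / b ^ Nat.log b m)
            + hsub b u (m % b ^ Nat.log b m) :=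
          Nat.add_le_add (Nat.mul_le_mul_right _ h3) h2

lemma pow_succ_gap (k l : ℕ) (hl : 2 ≤ l) : (k + 1) ^ l + 2 ≤ (k + 2) ^ l := by
  induction l, hl using Nat.le_induction with
  | base => ring_nf; nlinarith
  | succ l hl ih =>
    calc (k + 1) ^ (l + 1) + 2 ≤ ((k + 1) ^ l + 2) * (k + 2) := by
          rw [pow_succ]; nlinarith [pow_pos (by omega : 0 < k + 1) l]
      _ ≤ (k + 2) ^ l * (k + 2) := Nat.mul_le_mul_right _ ih
      _ = (k + 2) ^ (l + 1) := (pow_succ _ _).symm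

lemma B_pow (k l : ℕ) (hk : 1 ≤ k) :
    B (k + 1) ((k + 1) ^ l) = (k + 2) ^ hsub (k + 1) (k + 2) l := by
  have hb : 1 < k + 1 := by omega
  have hne : (k + 1) ^ l ≠ 0 := (Nat.pow_pos (by omega)).ne'
  rw [B, hsub, if_neg hne, Nat.log_pow hb, Nat.div_self (Nat.pow_pos (by omega)),
    Nat.mod_self]
  have h0 : hsub (k + 1) (k + 2) 0 = 0 := by rw [hsub]; simp
  rw [h0, mul_one, add_zero]

/-- **Lemma 4**: for `k ≥ 1`, if `G k m = (k+1)^l` is a single-term hereditary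
base-`(k+1)` representation with coefficient `1` and exponent `l ≥ k+1`, then
`G (k+1) m > G k m`. -/
theorem goodstein_lemma4 (m k l : ℕ) (hk : 1 ≤ k) (hl : k + 1 ≤ l)
    (h : G k m = (k + 1) ^ l) :
    G k m < G (k + 1) m := by
  obtain ⟨k, rfl⟩ : ∃ k', k = k' + 1 := ⟨k - 1, by omega⟩
  have hG : G (k + 1 + 1) m = B (k + 1 + 1) (G (k + 1) m) - 1 := rfl
  rw [hG, h, show k + 1 + 1 = (k + 1) + 1 from rfl, B_pow (k + 1) l (by omega)]
  have hE : l ≤ hsub (k + 1 + 1) (k + 1 + 2) l := hsub_ge _ _ (by omega) (by omega) l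
  have h1 : (k + 1 + 1) ^ l + 2 ≤ (k + 1 + 2) ^ l := pow_succ_gap (k + 1) l (by omega)
  have h2 : (k + 1 + 2) ^ l ≤ (k + 1 + 2) ^ hsub (k + 1 + 1) (k + 1 + 2) l :=
    Nat.pow_le_pow_right (by omega) hE
  omega
end

section
/- Corollary 7.1: let m ≥ 4 and let n be the least natural number (n ≥ 1) with G(n, m) = 0. Then n = 2·(2·n₂ + 1) for some natural number n₂ ≥ 2, and for every k with n₂ ≤ k < 2·n₂ one has G(k, m) = G(k+1, m). -/

lemma hsub_zero (b u : ℕ) : hsub b u 0 = 0 := by rw [hsub]; simp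

lemma hsub_of_lt {b u x : ℕ} (h : x < b) : hsub b u x = x := by
  rcases eq_or_ne x 0 with rfl | hx
  · exact hsub_zero b u
  · have hlog : Nat.log b x = 0 := Nat.log_eq_zero_iff.mpr (Or.inl h)
    rw [hsub, if_neg hx, hlog]
    simp [hsub_zero, Nat.mod_one]

lemma le_hsub {b u : ℕ} (hb : 1 ≤ b) (hu : b ≤ u) : ∀ x, x ≤ hsub b u x := by
  intro x
  induction x using Nat.strong_induction_on with
  | _ x ih =>
    rcases eq_or_ne x 0 with rfl | hx
    · simp [hsub_zero]
    · rw [hsub, if_neg hx]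
      have hlt : Nat.log b x < x := Nat.log_lt_self b hx
      have hpow : b ^ Nat.log b x ≤ x := Nat.pow_log_le_self b hx
      have hpos : 0 < b ^ Nat.log b x := Nat.pow_pos hb
      have h1 : x % b ^ Nat.log b x < x :=
        lt_of_lt_of_le (Nat.mod_lt _ hpos) hpow
      have h2 : Nat.log b x ≤ hsub b u (Nat.log b x) := ih _ hlt
      have h3 : b ^ Nat.log b x ≤ u ^ hsub b u (Nat.log b x) :=
        le_trans (Nat.pow_le_pow_right hb h2) (Nat.pow_le_pow_left hu _)
      have h4 : x % b ^ Nat.log b x ≤ hsub b u (x % b ^ Nat.log b x) := ih _ h1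
      calc x = b ^ Nat.log b x * (x / b ^ Nat.log b x) + x % b ^ Nat.log b x :=
            (Nat.div_add_mod x _).symm
        _ ≤ u ^ hsub b u (Nat.log b x) * (x / b ^ Nat.log b x)
              + hsub b u (x % b ^ Nat.log b x) :=
            Nat.add_le_add (Nat.mul_le_mul_right _ h3) h4

lemma hsub_of_mid {b u x : ℕ} (hb : 2 ≤ b) (h1 : b ≤ x) (h2 : x < b ^ 2) :
    hsub b u x = u * (x / b) + x % b := by
  have hx : x ≠ 0 := by omega
  have hlog : Nat.log b x = 1 := by
    apply Nat.log_eq_of_pow_le_of_lt_pow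
    · simpa using h1
    · simpa using h2
  rw [hsub, if_neg hx, hlog, pow_one,
      hsub_of_lt (show (1:ℕ) < b by omega),
      hsub_of_lt (Nat.mod_lt x (show 0 < b by omega)), pow_one]

lemma B_of_lt {b x : ℕ} (h : x < b) : B b x = x := hsub_of_lt h

lemma B_mid {b x : ℕ} (hb : 2 ≤ b) (h1 : b ≤ x) (h2 : x < b ^ 2) :
    B b x = x + x / b := by
  have hx : b * (x / b) + x % b = x := Nat.div_add_mod x b
  rw [B, hsub_of_mid hb h1 h2]
  calc (b + 1) * (x / b) + x % b = (b * (x / b) + x % b) + x / b := by ring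
    _ = x + x / b := by rw [hx]

lemma B_plateau {b x : ℕ} (hb : 2 ≤ b) (h1 : b ≤ x) (h2 : x < 2 * b) :
    B b x = x + 1 := by
  have hsq : x < b ^ 2 := by nlinarith
  rw [B_mid hb h1 hsq]
  have hq : x / b = 1 := Nat.div_eq_of_lt_le (by omega) (by omega)
  rw [hq]

lemma B_big {b x : ℕ} (hb : 2 ≤ b) (h : 2 * b ≤ x) : x + 2 ≤ B b x := by
  rcases lt_or_ge x (b ^ 2) with hsq | hsq
  · rw [B_mid hb (by omega) hsq]
    have hq : 2 ≤ x / b := (Nat.le_div_iff_mul_le (by omega)).mpr (by omega)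
    omega
  · have hb4 : 4 ≤ b ^ 2 := by nlinarith
    have hx : x ≠ 0 := by omega
    have he2 : 2 ≤ Nat.log b x := (Nat.le_log_iff_pow_le (by omega) hx).mpr hsq
    have hpow : b ^ Nat.log b x ≤ x := Nat.pow_log_le_self b hx
    have ha : 1 ≤ x / b ^ Nat.log b x :=
      (Nat.one_le_div_iff (Nat.pow_pos (by omega))).mpr hpow
    obtain ⟨d, hd⟩ : ∃ d, Nat.log b x = d + 2 := ⟨Nat.log b x - 2, by omega⟩
    have key : b ^ Nat.log b x + 2 ≤ (b + 1) ^ hsub b (b + 1) (Nat.log b x) := by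
      have k1 : (b + 1) ^ Nat.log b x ≤ (b + 1) ^ hsub b (b + 1) (Nat.log b x) :=
        Nat.pow_le_pow_right (by omega) (le_hsub (by omega) (by omega) _)
      rw [hd] at k1 ⊢
      have k2 : b ^ (d + 1) * (b + 1) ≤ (b + 1) ^ (d + 2) := by
        have : b ^ (d + 1) ≤ (b + 1) ^ (d + 1) := Nat.pow_le_pow_left (by omega) _
        calc b ^ (d + 1) * (b + 1) ≤ (b + 1) ^ (d + 1) * (b + 1) :=
              Nat.mul_le_mul_right _ this
          _ = (b + 1) ^ (d + 2) := by ring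
      have k3 : b ^ (d + 2) + 2 ≤ b ^ (d + 1) * (b + 1) := by
        have hbd : 2 ≤ b ^ (d + 1) := le_trans hb (Nat.le_self_pow (by omega) b)
        have : b ^ (d + 1) * (b + 1) = b ^ (d + 2) + b ^ (d + 1) := by ring
        omega
      omega
    have hmod : x % b ^ Nat.log b x ≤ hsub b (b + 1) (x % b ^ Nat.log b x) :=
      le_hsub (by omega) (by omega) _
    have hdm : b ^ Nat.log b x * (x / b ^ Nat.log b x) + x % b ^ Nat.log b x = x :=
      Nat.div_add_mod x _
    rw [B, hsub, if_neg hx]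
    have step : (b ^ Nat.log b x + 2) * (x / b ^ Nat.log b x)
        ≤ (b + 1) ^ hsub b (b + 1) (Nat.log b x) * (x / b ^ Nat.log b x) :=
      Nat.mul_le_mul_right _ key
    have expand : (b ^ Nat.log b x + 2) * (x / b ^ Nat.log b x)
        = b ^ Nat.log b x * (x / b ^ Nat.log b x) + 2 * (x / b ^ Nat.log b x) := by ring
    omega

/-- **Corollary 7.1**: let `m ≥ 4` and let `n` be the least natural number
(`n ≥ 1`) with `G n m = 0`. Then `n = 2 * (2 * n₂ + 1)` for some `n₂ ≥ 2`, and
`G k m = G (k+1) m` for every `k` with `n₂ ≤ k < 2 * n₂`. -/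
theorem goodstein_corollary7_1 (m n : ℕ) (hm : 4 ≤ m) (hn1 : 1 ≤ n) (hn : G n m = 0)
    (hmin : ∀ j : ℕ, 1 ≤ j → G j m = 0 → n ≤ j) :
    ∃ n₂ : ℕ, 2 ≤ n₂ ∧ n = 2 * (2 * n₂ + 1) ∧
      ∀ k : ℕ, n₂ ≤ k → k < 2 * n₂ → G k m = G (k + 1) m := by

  classical
  have Gstep : ∀ j : ℕ, 1 ≤ j → G (j + 1) m = B (j + 1) (G j m) - 1 := by
    intro j hj
    obtain ⟨k, rfl⟩ : ∃ k, j = k + 1 := ⟨j - 1, by omega⟩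
    rfl
  have hG1 : G 1 m = m := rfl
  have hex : ∃ j, 1 ≤ j ∧ G j m < j + 1 := ⟨n, hn1, by omega⟩
  set T := Nat.find hex with hTdef
  obtain ⟨hT1, hT2⟩ := Nat.find_spec hex
  rw [← hTdef] at hT1 hT2
  have hTmin : ∀ j, 1 ≤ j → j < T → j + 1 ≤ G j m := by
    intro j h1 h2
    have h3 := Nat.find_min hex h2
    by_contra hc
    exact h3 ⟨h1, by omega⟩
  have hTge2 : 2 ≤ T := by
    by_contra hc
    have hT1' : T = 1 := by omega
    rw [hT1'] at hT2
    omega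
  have hpredstep : G T m = B T (G (T - 1) m) - 1 := by
    have := Gstep (T - 1) (by omega)
    rwa [Nat.sub_add_cancel (by omega : 1 ≤ T)] at this
  have hpred : G (T - 1) m = T := by
    have hx : T ≤ G (T - 1) m := by
      have := hTmin (T - 1) (by omega) (by omega); omega
    rcases lt_or_ge (G (T - 1) m) (2 * T) with hc | hc
    · have hB := B_plateau hTge2 hx hc
      omega
    · have hB := B_big hTge2 hc
      omega
  have hGT : G T m = T := by
    have hB := B_plateau hTge2 (le_refl T) (by omega)
    rw [hpred] at hpredstep
    omega
  have htail : ∀ i, i ≤ T → G (T + i) m = T - i := by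
    intro i
    induction i with
    | zero => intro _; simpa using hGT
    | succ i ih =>
      intro hi
      have h0 := ih (by omega)
      have hstep := Gstep (T + i) (by omega)
      rw [h0, B_of_lt (show T - i < T + i + 1 by omega)] at hstep
      show G (T + i + 1) m = T - (i + 1)
      omega
  have hzero : G (2 * T) m = 0 := by
    have := htail T (le_refl T)
    rw [two_mul]
    omega
  have hpos : ∀ j, 1 ≤ j → j < 2 * T → G j m ≠ 0 := by
    intro j h1 h2
    rcases lt_or_ge j T with h | h
    · have := hTmin j h1 h; omega
    · obtain ⟨i, rfl⟩ : ∃ i, j = T + i := ⟨j - T, by omega⟩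
      have := htail i (by omega)
      omega
  have hn2T : n = 2 * T := by
    have h1 : n ≤ 2 * T := hmin (2 * T) (by omega) hzero
    by_contra hne
    exact hpos n hn1 (by omega) hn
  have mono : ∀ j, 1 ≤ j → j < T → G j m ≤ G (j + 1) m := by
    intro j h1 h2
    have hx := hTmin j h1 h2
    have hstep := Gstep j h1
    rcases lt_or_ge (G j m) (2 * (j + 1)) with hc | hc
    · rw [B_plateau (by omega) hx hc] at hstep; omega
    · have := B_big (show 2 ≤ j + 1 by omega) hc; omega
  have monochain : ∀ j k, 1 ≤ j → j ≤ k → k ≤ T → G j m ≤ G k m := by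
    intro j k h1 h2 h3
    induction k with
    | zero => omega
    | succ k ih =>
      rcases Nat.lt_or_ge j (k + 1) with h | h
      · exact le_trans (ih (by omega) (by omega)) (mono k (by omega) (by omega))
      · have hjk : j = k + 1 := by omega
        rw [hjk]
  have hexS : ∃ j, 1 ≤ j ∧ G j m = T := ⟨T, by omega, hGT⟩
  set S := Nat.find hexS with hSdef
  obtain ⟨hS1, hGS⟩ := Nat.find_spec hexS
  rw [← hSdef] at hS1 hGS
  have hSmin : ∀ j, 1 ≤ j → j < S → G j m ≠ T := fun j h1 h2 hc =>
    Nat.find_min hexS h2 ⟨h1, hc⟩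
  have hSleT1 : S ≤ T - 1 := Nat.find_min' hexS ⟨by omega, hpred⟩
  have hplat : ∀ j, S ≤ j → j ≤ T → G j m = T := by
    intro j hj1 hj2
    have h1 : G S m ≤ G j m := monochain S j hS1 hj1 hj2
    have h2 : G j m ≤ G T m := monochain j T (by omega) hj2 (le_refl T)
    omega
  have hT2S : T ≤ 2 * S + 1 := by
    by_contra hc
    have hx : 2 * (S + 1) ≤ G S m := by omega
    have hstep := Gstep S hS1
    have hb := B_big (show 2 ≤ S + 1 by omega) hx
    have hp : G (S + 1) m = T := hplat (S + 1) (by omega) (by omega)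
    omega
  have hSge2 : 2 ≤ S := by
    by_contra hc
    have hS1' : S = 1 := by omega
    rw [hS1'] at hGS
    omega
  have hTval : T = 2 * S + 1 := by
    have hx : S ≤ G (S - 1) m := by
      have := hTmin (S - 1) (by omega) (by omega); omega
    have hstep := Gstep (S - 1) (by omega)
    rw [Nat.sub_add_cancel (by omega : 1 ≤ S)] at hstep
    have hne := hSmin (S - 1) (by omega) (by omega)
    rcases lt_or_ge (G (S - 1) m) (2 * S) with hc | hc
    · rw [B_plateau hSge2 hx hc] at hstep
      omega
    · have := B_big hSge2 hc
      omega
  refine ⟨S, hSge2, by omega, ?_⟩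
  intro k hk1 hk2
  have h1 := hplat k hk1 (by omega)
  have h2 := hplat (k + 1) (by omega) (by omega)
  omega
end

section
/- For every natural number k ≥ 2 and every n ≥ 2 with L(n, k) > 0, the rank of the hereditary base-(k+n−1) representation of L(n, k) is strictly less than the base k+n−1; equivalently, L(n, k) < (k+n−1)^{(k+n−1)}, so that from the second term onward the base-change operation leaves all exponents in the hereditary representation of each term of L(·, k) unchanged. -/
lemma hsub_small (b u e : ℕ) (he : e < b) : hsub b u e = e := by
  rcases Nat.eq_zero_or_pos e with h | h
  · simp [h, hsub_zero]
  · have h0 : Nat.log b e = 0 := Nat.log_eq_zero_iff.mpr (Or.inl he)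
    rw [hsub, if_neg h.ne', h0, pow_zero, Nat.mod_one, Nat.div_one, hsub_zero]
    simp

lemma hsub_base (b u : ℕ) (hb : 2 ≤ b) : hsub b u b = u := by
  rw [hsub]
  have hb0 : b ≠ 0 := by omega
  have hlog : Nat.log b b = 1 := by simpa using Nat.log_pow (show 1 < b by omega) 1
  rw [if_neg hb0, hlog, pow_one, Nat.div_self (by omega), Nat.mod_self, hsub_zero,
    hsub_small b u 1 (by omega)]
  simp

lemma hsub_pow_self (b u : ℕ) (hb : 2 ≤ b) : hsub b u (b ^ b) = u ^ u := by
  rw [hsub]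
  have hbb : b ^ b ≠ 0 := (Nat.pow_pos (by omega)).ne'
  have hlog : Nat.log b (b ^ b) = b := Nat.log_pow (by omega) b
  rw [if_neg hbb, hlog, Nat.div_self (Nat.pow_pos (by omega)), Nat.mod_self,
    hsub_zero, hsub_base b u hb]
  simp

lemma hsub_lt_pow {b : ℕ} (hb : 2 ≤ b) :
    ∀ m E, m < b ^ E → E ≤ b → hsub b (b + 1) m < (b + 1) ^ E := by
  intro m
  induction m using Nat.strong_induction_on with
  | _ m ih =>
    intro E hm hE
    rcases Nat.eq_zero_or_pos m with h0 | h0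
    · simp [h0, hsub_zero, Nat.pow_pos]
    set e := Nat.log b m with he
    have hbe : 0 < b ^ e := Nat.pow_pos (by omega)
    have heE : e < E := Nat.log_lt_of_lt_pow h0.ne' hm
    have hbem : b ^ e ≤ m := Nat.pow_log_le_self b h0.ne'
    have hd : m / b ^ e < b := Nat.div_lt_of_lt_mul (by
      have := Nat.lt_pow_succ_log_self (show 1 < b by omega) m
      calc m < b ^ (e + 1) := this
        _ = b ^ e * b := by ring)
    have hr : m % b ^ e < b ^ e := Nat.mod_lt _ hbe
    have hrm : m % b ^ e < m := lt_of_lt_of_le hr hbem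
    have hIH : hsub b (b + 1) (m % b ^ e) < (b + 1) ^ e :=
      ih _ hrm e hr (by omega)
    rw [hsub, if_neg h0.ne', hsub_small b (b + 1) e (by omega), ← he]
    calc (b + 1) ^ e * (m / b ^ e) + hsub b (b + 1) (m % b ^ e)
        < (b + 1) ^ e * (m / b ^ e) + (b + 1) ^ e := by omega
      _ = (b + 1) ^ e * (m / b ^ e + 1) := by ring
      _ ≤ (b + 1) ^ e * (b + 1) := Nat.mul_le_mul_left _ (by omega)
      _ = (b + 1) ^ (e + 1) := by ring
      _ ≤ (b + 1) ^ E := Nat.pow_le_pow_right (by omega) (by omega)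

lemma L_lt (k : ℕ) (hk : 2 ≤ k) : ∀ n, 2 ≤ n → L n k < (k + n - 1) ^ (k + n - 1) := by
  intro n hn
  induction n, hn using Nat.le_induction with
  | base =>
    show L 2 k < (k + 2 - 1) ^ (k + 2 - 1)
    have : L 2 k = B (k + 0) (L 1 k) - 1 := rfl
    rw [this]
    have hL1 : L 1 k = k ^ k := rfl
    rw [hL1, Nat.add_zero, B, hsub_pow_self k (k + 1) hk]
    have : 0 < (k + 1) ^ (k + 1) := Nat.pow_pos (by omega)
    have h21 : k + 2 - 1 = k + 1 := by omega
    rw [h21]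
    omega
  | succ n hn ih =>
    set b := k + n - 1 with hb
    have hb2 : 2 ≤ b := by omega
    obtain ⟨m, rfl⟩ : ∃ m, n = m + 1 := ⟨n - 1, by omega⟩
    have hL : L (m + 1 + 1) k = B b (L (m + 1) k) - 1 := by
      have hbn : b = k + m := by omega
      rw [hbn]
      rfl
    have hBlt : B b (L (m + 1) k) < (b + 1) ^ b :=
      hsub_lt_pow hb2 (L (m + 1) k) b ih le_rfl
    have hb1 : k + (m + 1 + 1) - 1 = b + 1 := by omega
    rw [hL, hb1]
    have : (b + 1) ^ b ≤ (b + 1) ^ (b + 1) := Nat.pow_le_pow_right (by omega) (by omega)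
    omega

/-- For every `k ≥ 2` and every `n ≥ 2` with `L n k > 0`, the rank of the
hereditary base-`(k+n-1)` representation of `L n k` is strictly less than the
base `k+n-1`; equivalently `L n k < (k+n-1)^(k+n-1)`. -/
theorem L_rank_lt_base (k n : ℕ) (hk : 2 ≤ k) (hn : 2 ≤ n) (hpos : 0 < L n k) :
    Nat.log (k + n - 1) (L n k) < k + n - 1 ∧ L n k < (k + n - 1) ^ (k + n - 1) := by
  have h := L_lt k hk n hn
  exact ⟨Nat.log_lt_of_lt_pow hpos.ne' h, h⟩
end
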